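/- arXiv:1105.6305 — 4 statements merged into one kernel-verified Lean document; each statement's English description precedes it below -/
import Mathlib

section
/- Let Γ be a simple graph on a finite vertex set V, let s, t ∈ V be distinct vertices not adjacent in Γ, and let Γ ∪ e be Γ with the edge e = (s, t) added. If ℓ is a maximal clique of Γ ∪ e containing both s and t, then there exist maximal cliques ℓ_s and ℓ_t of Γ with s ∈ ℓ_s, t ∈ ℓ_t, ℓ \ {t} ⊆ ℓ_s, ℓ \ {s} ⊆ ℓ_t, and ℓ_s ∩ ℓ_t = ℓ \ {s, t}. -/
/-- A maximal clique of a simple graph: a clique not properly contained in any other clique. -/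
def IsMaxClique {V : Type*} (G : SimpleGraph V) (c : Set V) : Prop :=
  G.IsClique c ∧ ∀ d : Set V, G.IsClique d → c ⊆ d → c = d

lemma exists_maxclique_ext {V : Type*} (G : SimpleGraph V) (c : Set V) (hc : G.IsClique c) :
    ∃ m : Set V, IsMaxClique G m ∧ c ⊆ m := by
  obtain ⟨m, hcm, hmmax⟩ := zorn_subset_nonempty {d : Set V | G.IsClique d} (fun C hC hchain hne => by
    refine ⟨⋃₀ C, ?_, fun a ha => Set.subset_sUnion_of_mem ha⟩
    intro x hx y hy hxy
    obtain ⟨a, haC, hxa⟩ := hx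
    obtain ⟨b, hbC, hyb⟩ := hy
    rcases hchain.total haC hbC with h | h
    · exact hC hbC (h hxa) hyb hxy
    · exact hC haC hxa (h hyb) hxy) c hc
  exact ⟨m, ⟨hmmax.prop, fun d hd hsub => hmmax.eq_of_le hd hsub⟩, hcm⟩

/-- If `ℓ` is a maximal clique of `Γ ∪ e` containing both `s` and `t`,
then there are maximal cliques `ℓs`, `ℓt` of `Γ` with `s ∈ ℓs`, `t ∈ ℓt`,
`ℓ \ {t} ⊆ ℓs`, `ℓ \ {s} ⊆ ℓt`, and `ℓs ∩ ℓt = ℓ \ {s, t}`. -/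
theorem statement_3 {V : Type*} [Fintype V] (Γ : SimpleGraph V) (s t : V) (hst : s ≠ t)
    (hadj : ¬ Γ.Adj s t) (ℓ : Set V)
    (hmax : IsMaxClique (Γ ⊔ SimpleGraph.edge s t) ℓ) (hs : s ∈ ℓ) (ht : t ∈ ℓ) :
    ∃ ℓs ℓt : Set V, IsMaxClique Γ ℓs ∧ IsMaxClique Γ ℓt ∧ s ∈ ℓs ∧ t ∈ ℓt ∧
      ℓ \ {t} ⊆ ℓs ∧ ℓ \ {s} ⊆ ℓt ∧ ℓs ∩ ℓt = ℓ \ {s, t} := by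
  have key : ∀ u : V, u ∈ ({s, t} : Set V) → Γ.IsClique (ℓ \ {u}) := by
    intro u hu x hx y hy hxy
    have h := hmax.1 hx.1 hy.1 hxy
    rcases h with h | h
    · exact h
    · exfalso
      rw [SimpleGraph.edge_adj] at h
      rcases hu with hu | hu <;> rcases h.1 with ⟨h1, h2⟩ | ⟨h1, h2⟩ <;>
        simp_all [Set.mem_diff]
  obtain ⟨ℓs, hℓs, hsubs⟩ := exists_maxclique_ext Γ (ℓ \ {t}) (key t (by simp))
  obtain ⟨ℓt, hℓt, hsubt⟩ := exists_maxclique_ext Γ (ℓ \ {s}) (key s (by simp))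
  have hsℓs : s ∈ ℓs := hsubs ⟨hs, hst⟩
  have htℓt : t ∈ ℓt := hsubt ⟨ht, fun h => hst h.symm⟩
  have htns : t ∉ ℓs := fun h => hadj (hℓs.1 hsℓs h hst)
  have hsnt : s ∉ ℓt := fun h => hadj (hℓt.1 h htℓt hst)
  refine ⟨ℓs, ℓt, hℓs, hℓt, hsℓs, htℓt, hsubs, hsubt, ?_⟩
  ext x
  constructor
  · rintro ⟨hxs, hxt⟩
    have hxne_s : x ≠ s := fun h => hsnt (h ▸ hxt)
    have hxne_t : x ≠ t := fun h => htns (h ▸ hxs)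
    -- show x ∈ ℓ using maximality of ℓ
    have hclique : (Γ ⊔ SimpleGraph.edge s t).IsClique (ℓ ∪ {x}) := by
      intro a ha b hb hab
      rcases ha with ha | ha <;> rcases hb with hb | hb
      · exact hmax.1 ha hb hab
      · -- b = x
        rcases hb with rfl
        by_cases hbt : a = t
        · subst hbt; exact Or.inl (hℓt.1 htℓt hxt hab)
        · exact Or.inl (hℓs.1 (hsubs ⟨ha, hbt⟩) hxs hab)
      · rcases ha with rfl
        by_cases hbt : b = t
        · subst hbt; exact Or.inl (hℓt.1 hxt htℓt hab)
        · exact Or.inl (hℓs.1 hxs (hsubs ⟨hb, hbt⟩) hab)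
      · simp_all
    have := hmax.2 (ℓ ∪ {x}) hclique Set.subset_union_left
    have hxℓ : x ∈ ℓ := this ▸ Or.inr rfl
    exact ⟨hxℓ, by simp [hxne_s, hxne_t]⟩
  · rintro ⟨hxℓ, hxst⟩
    simp only [Set.mem_insert_iff, Set.mem_singleton_iff, not_or] at hxst
    exact ⟨hsubs ⟨hxℓ, hxst.2⟩, hsubt ⟨hxℓ, hxst.1⟩⟩
end

section
/- Let Γ be a simple graph on a finite vertex set V, let s, t ∈ V be distinct vertices not adjacent in Γ, and let Γ ∪ e be Γ with the edge e = (s, t) added. If ℓ is a maximal clique of Γ ∪ e containing both s and t, then there exist maximal cliques ℓ_s and ℓ_t of Γ with s ∈ ℓ_s and t ∈ ℓ_t such that ℓ = (ℓ_s ∩ ℓ_t) ∪ {s, t}. -/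
lemma exists_maxclique_superset {V : Type*} [Fintype V] (G : SimpleGraph V) (c : Set V)
    (hc : G.IsClique c) : ∃ d : Set V, IsMaxClique G d ∧ c ⊆ d := by
  classical
  have hS : ({d : Set V | G.IsClique d ∧ c ⊆ d}).Finite := Set.toFinite _
  obtain ⟨d, hd, hdm'⟩ := hS.exists_maximalFor id _ ⟨c, hc, subset_rfl⟩
  have hdm : ∀ e ∈ {d : Set V | G.IsClique d ∧ c ⊆ d}, d ⊆ e → d = e :=
    fun e he hde => hde.antisymm (hdm' he hde)
  exact ⟨d, ⟨hd.1, fun e he hde => hdm e ⟨he, hd.2.trans hde⟩ hde⟩, hd.2⟩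

/-- If `ℓ` is a maximal clique of `Γ ∪ e` containing both `s` and `t`,
then there are maximal cliques `ℓs`, `ℓt` of `Γ` with `s ∈ ℓs`, `t ∈ ℓt` and
`ℓ = (ℓs ∩ ℓt) ∪ {s, t}`. -/
theorem statement_4 {V : Type*} [Fintype V] (Γ : SimpleGraph V) (s t : V) (hst : s ≠ t)
    (hadj : ¬ Γ.Adj s t) (ℓ : Set V)
    (hmax : IsMaxClique (Γ ⊔ SimpleGraph.edge s t) ℓ) (hs : s ∈ ℓ) (ht : t ∈ ℓ) :
    ∃ ℓs ℓt : Set V, IsMaxClique Γ ℓs ∧ IsMaxClique Γ ℓt ∧ s ∈ ℓs ∧ t ∈ ℓt ∧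
      ℓ = (ℓs ∩ ℓt) ∪ {s, t} := by
  classical
  -- ℓ \ {t} is a clique of Γ
  have hct : Γ.IsClique (ℓ \ {t}) := by
    intro u hu v hv huv
    have h := hmax.1 hu.1 hv.1 huv
    rcases h with h | h
    · exact h
    · rw [SimpleGraph.edge_adj] at h
      rcases h.1 with ⟨_, h2⟩ | ⟨h1, _⟩
      · exact absurd h2 hv.2
      · exact absurd h1 hu.2
  have hcs : Γ.IsClique (ℓ \ {s}) := by
    intro u hu v hv huv
    have h := hmax.1 hu.1 hv.1 huv
    rcases h with h | h
    · exact h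
    · rw [SimpleGraph.edge_adj] at h
      rcases h.1 with ⟨h1, _⟩ | ⟨_, h2⟩
      · exact absurd h1 hu.2
      · exact absurd h2 hv.2
  obtain ⟨ℓs, hℓs, hsub_s⟩ := exists_maxclique_superset Γ _ hct
  obtain ⟨ℓt, hℓt, hsub_t⟩ := exists_maxclique_superset Γ _ hcs
  have hsℓs : s ∈ ℓs := hsub_s ⟨hs, hst⟩
  have htℓt : t ∈ ℓt := hsub_t ⟨ht, (Ne.symm hst)⟩
  refine ⟨ℓs, ℓt, hℓs, hℓt, hsℓs, htℓt, ?_⟩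
  apply Set.eq_of_subset_of_subset
  · intro x hx
    by_cases hxs : x = s
    · exact Or.inr (Or.inl hxs)
    by_cases hxt : x = t
    · exact Or.inr (Or.inr hxt)
    exact Or.inl ⟨hsub_s ⟨hx, hxt⟩, hsub_t ⟨hx, hxs⟩⟩
  · rintro x (⟨hxs, hxt⟩ | (rfl | rfl))
    · -- x ∈ ℓs ∩ ℓt, show x ∈ ℓ
      by_cases hxmem : x ∈ ℓ
      · exact hxmem
      have hins : (Γ ⊔ SimpleGraph.edge s t).IsClique (insert x ℓ) := by
        apply hmax.1.insert
        intro y hy hxy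
        by_cases hyt : y = t
        · subst hyt
          exact Or.inl (hℓt.1 hxt htℓt hxy)
        · exact Or.inl (hℓs.1 hxs (hsub_s ⟨hy, hyt⟩) hxy)
      have := hmax.2 _ hins (Set.subset_insert x ℓ)
      rw [this]
      exact Set.mem_insert x ℓ
    · exact hs
    · exact ht
end

section
/- Let Γ be a simple graph on a finite vertex set V, let s, t ∈ V be distinct vertices not adjacent in Γ, and let Γ ∪ e be Γ with the edge e = (s, t) added. Every maximal clique of Γ ∪ e is either a maximal clique of Γ, or of the form (ℓ_s ∩ ℓ_t) ∪ {s, t} for some maximal cliques ℓ_s and ℓ_t of Γ with s ∈ ℓ_s and t ∈ ℓ_t. -/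
lemma exists_max_clique_ext {V : Type*} [Fintype V] (Γ : SimpleGraph V) {c : Set V}
    (hc : Γ.IsClique c) : ∃ m, IsMaxClique Γ m ∧ c ⊆ m := by
  obtain ⟨m, hm, hmaxm⟩ := Set.Finite.exists_maximalFor (id : Set V → Set V)
    {d | Γ.IsClique d ∧ c ⊆ d} (Set.toFinite _) ⟨c, hc, subset_rfl⟩
  exact ⟨m, ⟨hm.1, fun d hd hsub => hsub.antisymm (hmaxm ⟨hd, hm.2.trans hsub⟩ hsub)⟩, hm.2⟩

/-- Every maximal clique of `Γ ∪ e` is either a maximal clique of `Γ`, or of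
the form `(ℓs ∩ ℓt) ∪ {s, t}` for maximal cliques `ℓs`, `ℓt` of `Γ` with `s ∈ ℓs`, `t ∈ ℓt`. -/
theorem statement_5 {V : Type*} [Fintype V] (Γ : SimpleGraph V) (s t : V) (hst : s ≠ t)
    (hadj : ¬ Γ.Adj s t) (ℓ : Set V)
    (hmax : IsMaxClique (Γ ⊔ SimpleGraph.edge s t) ℓ) :
    IsMaxClique Γ ℓ ∨
      ∃ ℓs ℓt : Set V, IsMaxClique Γ ℓs ∧ IsMaxClique Γ ℓt ∧ s ∈ ℓs ∧ t ∈ ℓt ∧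
        ℓ = (ℓs ∩ ℓt) ∪ {s, t} := by
  have hclique := hmax.1
  by_cases hboth : s ∈ ℓ ∧ t ∈ ℓ
  · right
    obtain ⟨hsℓ, htℓ⟩ := hboth
    -- ℓ \ {t} and ℓ \ {s} are Γ-cliques
    have hΓs : Γ.IsClique (ℓ \ {t}) := by
      intro x hx y hy hxy
      have h := hclique hx.1 hy.1 hxy
      rw [SimpleGraph.sup_adj] at h
      rcases h with h | h
      · exact h
      · rw [SimpleGraph.edge_adj] at h
        exfalso
        rcases h.1 with ⟨_, rfl⟩ | ⟨rfl, _⟩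
        · exact hy.2 rfl
        · exact hx.2 rfl
    have hΓt : Γ.IsClique (ℓ \ {s}) := by
      intro x hx y hy hxy
      have h := hclique hx.1 hy.1 hxy
      rw [SimpleGraph.sup_adj] at h
      rcases h with h | h
      · exact h
      · rw [SimpleGraph.edge_adj] at h
        exfalso
        rcases h.1 with ⟨rfl, _⟩ | ⟨_, rfl⟩
        · exact hx.2 rfl
        · exact hy.2 rfl
    obtain ⟨ℓs, hℓs, hsubs⟩ := exists_max_clique_ext Γ hΓs
    obtain ⟨ℓt, hℓt, hsubt⟩ := exists_max_clique_ext Γ hΓt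
    have hsℓs : s ∈ ℓs := hsubs ⟨hsℓ, hst⟩
    have htℓt : t ∈ ℓt := hsubt ⟨htℓ, fun h => hst h.symm⟩
    refine ⟨ℓs, ℓt, hℓs, hℓt, hsℓs, htℓt, ?_⟩
    -- ℓ ⊆ (ℓs ∩ ℓt) ∪ {s, t}
    have hsub : ℓ ⊆ (ℓs ∩ ℓt) ∪ {s, t} := by
      intro x hx
      by_cases hxs : x = s
      · exact Or.inr (Or.inl hxs)
      by_cases hxt : x = t
      · exact Or.inr (Or.inr hxt)
      exact Or.inl ⟨hsubs ⟨hx, hxt⟩, hsubt ⟨hx, hxs⟩⟩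
    -- the RHS is a clique of Γ ⊔ edge s t
    have hcl : (Γ ⊔ SimpleGraph.edge s t).IsClique ((ℓs ∩ ℓt) ∪ {s, t}) := by
      intro x hx y hy hxy
      rw [SimpleGraph.sup_adj]
      rcases hx with hx | hx <;> rcases hy with hy | hy
      · exact Or.inl (hℓs.1 hx.1 hy.1 hxy)
      · rcases hy with rfl | rfl
        · exact Or.inl (hℓs.1 hx.1 hsℓs hxy)
        · exact Or.inl (hℓt.1 hx.2 htℓt hxy)
      · rcases hx with rfl | rfl
        · exact Or.inl (hℓs.1 hsℓs hy.1 hxy)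
        · exact Or.inl (hℓt.1 htℓt hy.2 hxy)
      · rcases hx with rfl | rfl <;> rcases hy with rfl | rfl
        · exact absurd rfl hxy
        · exact Or.inr ((SimpleGraph.edge_adj _ _ _ _).2 ⟨Or.inl ⟨rfl, rfl⟩, hxy⟩)
        · exact Or.inr ((SimpleGraph.edge_adj _ _ _ _).2 ⟨Or.inr ⟨rfl, rfl⟩, hxy⟩)
        · exact absurd rfl hxy
    exact hmax.2 _ hcl hsub
  · left
    have hΓ : Γ.IsClique ℓ := by
      intro x hx y hy hxy
      have h := hclique hx hy hxy
      rw [SimpleGraph.sup_adj] at h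
      rcases h with h | h
      · exact h
      · rw [SimpleGraph.edge_adj] at h
        exfalso
        rcases h.1 with ⟨rfl, rfl⟩ | ⟨rfl, rfl⟩
        · exact hboth ⟨hx, hy⟩
        · exact hboth ⟨hy, hx⟩
    refine ⟨hΓ, fun d hd hsub => hmax.2 d (hd.mono le_sup_left) hsub⟩
end

section
/- Let Γ be a simple graph on a finite vertex set V, let s, t ∈ V be distinct vertices not adjacent in Γ, and let Γ ∪ e be Γ with the edge e = (s, t) added. A set K of vertices is a clique of Γ ∪ e but not a clique of Γ if and only if there exist maximal cliques ℓ_s and ℓ_t of Γ with s ∈ ℓ_s and t ∈ ℓ_t and a subset σ ⊆ ℓ_s ∩ ℓ_t such that K = σ ∪ {s, t}. -/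
lemma exists_maxClique_supset {V : Type*} (G : SimpleGraph V) {c : Set V}
    (hc : G.IsClique c) : ∃ m, c ⊆ m ∧ IsMaxClique G m := by
  obtain ⟨m, hsub, hmax⟩ := zorn_subset_nonempty {d : Set V | G.IsClique d}
    (fun C hC hchain hne => ⟨⋃₀ C, fun x hx y hy hxy => by
      obtain ⟨a, haC, hxa⟩ := hx
      obtain ⟨b, hbC, hyb⟩ := hy
      rcases hchain.total haC hbC with h | h
      · exact hC hbC (h hxa) hyb hxy
      · exact hC haC hxa (h hyb) hxy,
      fun s hs => Set.subset_sUnion_of_mem hs⟩) c hc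
  exact ⟨m, hsub, hmax.1, fun d hd hmd => hmd.antisymm (hmax.2 hd hmd)⟩

/-- `K` is a clique of `Γ ∪ e` but not a clique of `Γ` if and only if there
are maximal cliques `ℓs ∋ s`, `ℓt ∋ t` of `Γ` and a subset `σ ⊆ ℓs ∩ ℓt` with
`K = σ ∪ {s, t}`. -/
theorem statement_11 {V : Type*} [Fintype V] (Γ : SimpleGraph V) (s t : V) (hst : s ≠ t)
    (hadj : ¬ Γ.Adj s t) (K : Set V) :
    ((Γ ⊔ SimpleGraph.edge s t).IsClique K ∧ ¬ Γ.IsClique K) ↔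
      ∃ ℓs ℓt : Set V, IsMaxClique Γ ℓs ∧ IsMaxClique Γ ℓt ∧ s ∈ ℓs ∧ t ∈ ℓt ∧
        ∃ σ : Set V, σ ⊆ ℓs ∩ ℓt ∧ K = σ ∪ {s, t} := by
  constructor
  · rintro ⟨hK, hnK⟩
    -- find the bad pair; it must be {s, t}
    have hpair : ∀ x ∈ K, ∀ y ∈ K, x ≠ y → ¬ Γ.Adj x y → (x = s ∧ y = t) ∨ (x = t ∧ y = s) := by
      intro x hx y hy hxy hxyadj
      have := hK hx hy hxy
      rw [SimpleGraph.sup_adj, SimpleGraph.edge_adj] at this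
      rcases this with h | ⟨h, _⟩
      · exact absurd h hxyadj
      · exact h
    have hstK : s ∈ K ∧ t ∈ K := by
      by_contra h
      apply hnK
      intro x hx y hy hxy
      by_contra hxyadj
      rcases hpair x hx y hy hxy hxyadj with ⟨rfl, rfl⟩ | ⟨rfl, rfl⟩
      · exact h ⟨hx, hy⟩
      · exact h ⟨hy, hx⟩
    obtain ⟨hsK, htK⟩ := hstK
    -- K \ {t} and K \ {s} are Γ-cliques
    have hcl : ∀ u v : V, (u = s ∧ v = t) → Γ.IsClique (K \ {v}) := by
      rintro u v ⟨rfl, rfl⟩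
      intro x hx y hy hxy
      by_contra hxyadj
      rcases hpair x hx.1 y hy.1 hxy hxyadj with ⟨rfl, rfl⟩ | ⟨rfl, rfl⟩
      · exact hy.2 rfl
      · exact hx.2 rfl
    have hclt : Γ.IsClique (K \ {t}) := hcl s t ⟨rfl, rfl⟩
    have hcls : Γ.IsClique (K \ {s}) := by
      intro x hx y hy hxy
      by_contra hxyadj
      rcases hpair x hx.1 y hy.1 hxy hxyadj with ⟨rfl, rfl⟩ | ⟨rfl, rfl⟩
      · exact hx.2 rfl
      · exact hy.2 rfl
    obtain ⟨ℓs, hsubs, hms⟩ := exists_maxClique_supset Γ hclt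
    obtain ⟨ℓt, hsubt, hmt⟩ := exists_maxClique_supset Γ hcls
    refine ⟨ℓs, ℓt, hms, hmt, hsubs ⟨hsK, hst⟩, hsubt ⟨htK, hst.symm⟩,
      K \ {s, t}, ?_, ?_⟩
    · intro x hx
      exact ⟨hsubs ⟨hx.1, fun h => hx.2 (Or.inr h)⟩, hsubt ⟨hx.1, fun h => hx.2 (Or.inl h)⟩⟩
    · ext x
      simp only [Set.mem_union, Set.mem_diff, Set.mem_insert_iff, Set.mem_singleton_iff]
      constructor
      · intro hx; by_cases h : x = s ∨ x = t
        · exact Or.inr h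
        · exact Or.inl ⟨hx, h⟩
      · rintro (⟨h, _⟩ | (rfl | rfl)) <;> assumption
  · rintro ⟨ℓs, ℓt, hms, hmt, hsℓ, htℓ, σ, hσ, rfl⟩
    constructor
    · intro x hx y hy hxy
      rw [SimpleGraph.sup_adj, SimpleGraph.edge_adj]
      have mem : ∀ z, z ∈ σ ∪ {s, t} → z ∈ ℓs ∪ {t} := by
        rintro z (hz | (rfl | rfl))
        · exact Or.inl (hσ hz).1
        · exact Or.inl hsℓ
        · exact Or.inr rfl
      have mem' : ∀ z, z ∈ σ ∪ {s, t} → z ∈ ℓt ∪ {s} := by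
        rintro z (hz | (rfl | rfl))
        · exact Or.inl (hσ hz).2
        · exact Or.inr rfl
        · exact Or.inl htℓ
      rcases mem x hx with hxs | hxt <;> rcases mem y hy with hys | hyt
      · exact Or.inl (hms.1 hxs hys hxy)
      · cases hyt
        rcases mem' x hx with hxs' | hxs'
        · exact Or.inl (hmt.1 hxs' htℓ hxy)
        · exact Or.inr ⟨Or.inl ⟨hxs', rfl⟩, hxy⟩
      · cases hxt
        rcases mem' y hy with hys' | hys'
        · exact Or.inl (hmt.1 htℓ hys' hxy)
        · exact Or.inr ⟨Or.inr ⟨rfl, hys'⟩, hxy⟩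
      · cases hxt; cases hyt; exact absurd rfl hxy
    · intro h
      exact hadj (h (Or.inr (Or.inl rfl)) (Or.inr (Or.inr rfl)) hst)
end
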